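/- arXiv:1803.01082 — 10 statements merged into one kernel-verified Lean document; each statement's English description precedes it below -/
import Mathlib

section
/- Let μ₁, μ₂ be positive reals with μ₁ ≠ μ₂, let p ∈ (0,1) satisfy p/μ₁ + (1−p)/μ₂ = 1 (unit-mean hyper-exponential service distribution), and let θ > 0. Then θ·(θ + μ₁μ₂)/(2(θ + μ₁ + μ₂ − 1)) > μ₁μ₂·θ/(2(μ₁ + μ₂ − 1)); equivalently, the true large-deviations exponent −θ(θ + μ₁μ₂)/(2(θ + μ₁ + μ₂ − 1)) is strictly less than the conjectured exponent −μ₁μ₂θ/(2(μ₁ + μ₂ − 1)). -/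
/-- The true large-deviations exponent is strictly less than Dai and He's
conjectured exponent: for a unit-mean hyper-exponential service distribution
with `μ₁ ≠ μ₂`, one has
`θ(θ + μ₁μ₂)/(2(θ + μ₁ + μ₂ − 1)) > μ₁μ₂θ/(2(μ₁ + μ₂ − 1))`. -/
theorem true_exponent_strictly_greater
    (μ₁ μ₂ p θ : ℝ)
    (hμ₁ : 0 < μ₁) (hμ₂ : 0 < μ₂) (hne : μ₁ ≠ μ₂)
    (hp0 : 0 < p) (hp1 : p < 1)
    (hmean : p / μ₁ + (1 - p) / μ₂ = 1)
    (hθ : 0 < θ) :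
    θ * (θ + μ₁ * μ₂) / (2 * (θ + μ₁ + μ₂ - 1))
      > μ₁ * μ₂ * θ / (2 * (μ₁ + μ₂ - 1)) := by
  have hab : 0 < μ₁ * μ₂ := mul_pos hμ₁ hμ₂
  have hmean' : p * μ₂ + (1 - p) * μ₁ = μ₁ * μ₂ := by
    field_simp at hmean; linarith
  have hsq : 0 < (μ₁ - μ₂)^2 := by have h := sub_ne_zero.mpr hne; positivity
  have hpq : 0 < p * (1 - p) := mul_pos hp0 (by linarith)
  have key : μ₁ * μ₂ < μ₁ + μ₂ - 1 := by
    nlinarith [mul_pos hpq hsq, sq_nonneg (μ₁ + μ₂)]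
  have hd1 : 0 < 2 * (μ₁ + μ₂ - 1) := by linarith
  have hd2 : 0 < 2 * (θ + μ₁ + μ₂ - 1) := by linarith
  rw [gt_iff_lt, div_lt_div_iff₀ hd1 hd2]
  nlinarith [mul_pos hθ (sub_pos.mpr key)]
end

section
/- Let μ₁ᵃ = (15 − 2√2)/31, μ₂ᵃ = 2√2, pᵃ = (121 − 32√2)/257, μ₁ᵇ = (3 − √2)/7, μ₂ᵇ = √2, pᵇ = (7 − 4√2)/17, and θ₀ = 1/5. Then: μ₁ᵃ, μ₂ᵃ, μ₁ᵇ, μ₂ᵇ are all positive; 0 < θ₀ < min(μ₁ᵃ, μ₂ᵃ, μ₁ᵇ, μ₂ᵇ); pᵃ/μ₁ᵃ + (1−pᵃ)/μ₂ᵃ = 1 and pᵇ/μ₁ᵇ + (1−pᵇ)/μ₂ᵇ = 1 (both distributions have mean 1); 2pᵃ/(μ₁ᵃ)² + 2(1−pᵃ)/(μ₂ᵃ)² = 4 and 2pᵇ/(μ₁ᵇ)² + 2(1−pᵇ)/(μ₂ᵇ)² = 4 (both have second moment 4); but θ₀(θ₀ + μ₁ᵃμ₂ᵃ)/(2(θ₀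 + μ₁ᵃ + μ₂ᵃ − 1)) ≠ θ₀(θ₀ + μ₁ᵇμ₂ᵇ)/(2(θ₀ + μ₁ᵇ + μ₂ᵇ − 1)). -/
/-- Two explicit hyper-exponential distributions with equal first two moments
(mean 1, second moment 4) but different large-deviations exponents for the
abandonment rate `θ₀ = 1/5`, disproving the insensitivity conjectured by
Dai and He. -/
theorem non_insensitivity_example :
    let μ₁a : ℝ := (15 - 2 * Real.sqrt 2) / 31
    let μ₂a : ℝ := 2 * Real.sqrt 2
    let pa : ℝ := (121 - 32 * Real.sqrt 2) / 257
    let μ₁b : ℝ := (3 - Real.sqrt 2) / 7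
    let μ₂b : ℝ := Real.sqrt 2
    let pb : ℝ := (7 - 4 * Real.sqrt 2) / 17
    let θ₀ : ℝ := 1 / 5
    0 < μ₁a ∧ 0 < μ₂a ∧ 0 < μ₁b ∧ 0 < μ₂b ∧
    0 < θ₀ ∧ θ₀ < min (min μ₁a μ₂a) (min μ₁b μ₂b) ∧
    pa / μ₁a + (1 - pa) / μ₂a = 1 ∧
    pb / μ₁b + (1 - pb) / μ₂b = 1 ∧
    2 * pa / μ₁a ^ 2 + 2 * (1 - pa) / μ₂a ^ 2 = 4 ∧
    2 * pb / μ₁b ^ 2 + 2 * (1 - pb) / μ₂b ^ 2 = 4 ∧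
    θ₀ * (θ₀ + μ₁a * μ₂a) / (2 * (θ₀ + μ₁a + μ₂a - 1))
      ≠ θ₀ * (θ₀ + μ₁b * μ₂b) / (2 * (θ₀ + μ₁b + μ₂b - 1)) := by
  intro μ₁a μ₂a pa μ₁b μ₂b pb θ₀
  have hs2 : Real.sqrt 2 ^ 2 = 2 := Real.sq_sqrt (by norm_num)
  have hlo : (1.414 : ℝ) < Real.sqrt 2 := by
    nlinarith [Real.sqrt_nonneg 2, hs2]
  have hhi : Real.sqrt 2 < 1.4143 := by
    nlinarith [Real.sqrt_nonneg 2, hs2]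
  set s := Real.sqrt 2 with hsdef
  have h1a : 0 < μ₁a := by simp only [μ₁a]; nlinarith
  have h2a : 0 < μ₂a := by simp only [μ₂a]; nlinarith
  have h1b : 0 < μ₁b := by simp only [μ₁b]; nlinarith
  have h2b : 0 < μ₂b := by simp only [μ₂b]; nlinarith
  have hn1 : (15 - 2 * s) ≠ 0 := by nlinarith
  have hn2 : (3 - s) ≠ 0 := by nlinarith
  have hn3 : s ≠ 0 := by nlinarith
  refine ⟨h1a, h2a, h1b, h2b, by norm_num, ?_, ?_, ?_, ?_, ?_, ?_⟩
  · simp only [μ₁a, μ₂a, μ₁b, μ₂b, θ₀, lt_min_iff]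
    refine ⟨⟨?_, ?_⟩, ?_, ?_⟩ <;> nlinarith
  · simp only [pa, μ₁a, μ₂a]
    rw [← hsdef]
    have hn1' : 15 - s * 2 ≠ 0 := by nlinarith
    field_simp
    nlinarith
  · simp only [pb, μ₁b, μ₂b]
    rw [← hsdef]
    field_simp
    nlinarith
  · simp only [pa, μ₁a, μ₂a]
    rw [← hsdef]
    field_simp
    nlinarith
  · simp only [pb, μ₁b, μ₂b]
    rw [← hsdef]
    field_simp
    nlinarith
  · have hda : 0 < 2 * (θ₀ + μ₁a + μ₂a - 1) := by
      simp only [μ₁a, μ₂a, θ₀]; nlinarith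
    have hdb : 0 < 2 * (θ₀ + μ₁b + μ₂b - 1) := by
      simp only [μ₁b, μ₂b, θ₀]; nlinarith
    intro h
    rw [div_eq_div_iff hda.ne' hdb.ne'] at h
    simp only [μ₁a, μ₂a, μ₁b, μ₂b, θ₀] at h
    nlinarith [h, hs2, hlo, hhi]
end

section
/- Let a, θ be reals with 0 < θ < a, and let 0 ≤ s ≤ t. Then 2·∫_s^t ( ∫_s^{y₂} exp(−θ(y₁+y₂))·exp(−a(y₂−y₁)) dy₁ ) dy₂ = exp(−2θs)/(θ(a+θ)) − exp(−2θt)/(θ(a−θ)) + 2·exp((a−θ)s)·exp(−(a+θ)t)/((a−θ)(a+θ)). -/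
open intervalIntegral

lemma exp_mul_integral (c p q : ℝ) (hc : c ≠ 0) :
    ∫ x in p..q, Real.exp (c * x) = (Real.exp (c * q) - Real.exp (c * p)) / c := by
  have h := intervalIntegral.mul_integral_comp_mul_left (a := p) (b := q)
    (c := c) (f := fun u => Real.exp u)
  rw [integral_exp] at h
  field_simp
  exact h

/-- The core iterated-integral computation in the covariance of the Gaussian
process `𝒢̄`: for `0 < θ < a` and `0 ≤ s ≤ t`,
`2∫_s^t ∫_s^{y₂} e^{−θ(y₁+y₂)} e^{−a(y₂−y₁)} dy₁ dy₂` equals the displayed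
explicit expression. -/
theorem covariance_core_integral
    (a θ s t : ℝ) (hθ : 0 < θ) (hθa : θ < a) (hs : 0 ≤ s) (hst : s ≤ t) :
    2 * ∫ y₂ in s..t, (∫ y₁ in s..y₂,
        Real.exp (-(θ * (y₁ + y₂))) * Real.exp (-(a * (y₂ - y₁))))
      = Real.exp (-(2 * θ * s)) / (θ * (a + θ))
        - Real.exp (-(2 * θ * t)) / (θ * (a - θ))
        + 2 * Real.exp ((a - θ) * s) * Real.exp (-((a + θ) * t))
            / ((a - θ) * (a + θ)) := by
  have ham : a - θ ≠ 0 := by linarith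
  have hap : a + θ ≠ 0 := by linarith
  have hθ' : θ ≠ 0 := ne_of_gt hθ
  have hinner : ∀ y₂ : ℝ, (∫ y₁ in s..y₂,
      Real.exp (-(θ * (y₁ + y₂))) * Real.exp (-(a * (y₂ - y₁))))
      = (Real.exp (-(2 * θ) * y₂) - Real.exp ((a - θ) * s) * Real.exp (-(a + θ) * y₂))
          / (a - θ) := by
    intro y₂
    have : (∫ y₁ in s..y₂,
        Real.exp (-(θ * (y₁ + y₂))) * Real.exp (-(a * (y₂ - y₁))))
        = ∫ y₁ in s..y₂, Real.exp (-(a + θ) * y₂) * Real.exp ((a - θ) * y₁) := by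
      apply intervalIntegral.integral_congr
      intro y₁ _
      simp only [← Real.exp_add]
      ring_nf
    rw [this, intervalIntegral.integral_const_mul, exp_mul_integral _ _ _ ham,
      mul_div_assoc']
    congr 1
    rw [mul_sub, ← Real.exp_add, show -(a + θ) * y₂ + (a - θ) * y₂ = -(2 * θ) * y₂ by ring,
      mul_comm (Real.exp (-(a + θ) * y₂))]
  have houter : (∫ y₂ in s..t, (∫ y₁ in s..y₂,
      Real.exp (-(θ * (y₁ + y₂))) * Real.exp (-(a * (y₂ - y₁)))))
      = ∫ y₂ in s..t,
        (Real.exp (-(2 * θ) * y₂) - Real.exp ((a - θ) * s) * Real.exp (-(a + θ) * y₂))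
          / (a - θ) := by
    apply intervalIntegral.integral_congr
    intro y₂ _
    exact hinner y₂
  rw [houter]
  have hi1 : IntervalIntegrable (fun y₂ => Real.exp (-(2 * θ) * y₂)) MeasureTheory.volume s t :=
    (Real.continuous_exp.comp (continuous_const.mul continuous_id)).intervalIntegrable s t
  have hi2 : IntervalIntegrable (fun y₂ => Real.exp ((a - θ) * s) * Real.exp (-(a + θ) * y₂))
      MeasureTheory.volume s t :=
    (continuous_const.mul (Real.continuous_exp.comp
      (continuous_const.mul continuous_id))).intervalIntegrable s t
  simp_rw [div_eq_mul_inv, mul_comm _ (a - θ)⁻¹]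
  rw [intervalIntegral.integral_const_mul, intervalIntegral.integral_sub hi1 hi2,
    intervalIntegral.integral_const_mul,
    exp_mul_integral (-(2 * θ)) s t (by simpa using hθ'),
    exp_mul_integral (-(a + θ)) s t (neg_ne_zero.mpr hap)]
  have e4 : Real.exp ((a - θ) * s) * Real.exp (-(a + θ) * s) = Real.exp (-(2 * θ) * s) := by
    rw [← Real.exp_add]; congr 1; ring
  have h5 : -(a + θ) ≠ 0 := neg_ne_zero.mpr hap
  have h6 : -(2 * θ) ≠ 0 := by simpa using hθ'
  rw [show -(2 * θ * s) = -(2 * θ) * s by ring, show -(2 * θ * t) = -(2 * θ) * t by ring,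
    show -((a + θ) * t) = -(a + θ) * t by ring, ← e4]
  simp only [div_neg]
  field_simp
  ring
end

section
/- Let μ₁, μ₂ be positive reals, p ∈ (0,1), and 0 < θ < μ₁μ₂. Define V(s,t) := (p(1−p)(μ₁−μ₂)²/(θμ₁μ₂(μ₁μ₂+θ)) + 1/θ)·exp(−2θs) − (p(1−p)(μ₁−μ₂)²/(θμ₁μ₂(μ₁μ₂−θ)) + 1/θ)·exp(−2θt) + (2p(1−p)(μ₁−μ₂)²/(μ₁μ₂(μ₁μ₂−θ)(μ₁μ₂+θ)))·exp((μ₁μ₂−θ)s)·exp(−(μ₁μ₂+θ)t). Then for each fixed s ≥ 0, the function t ↦ V(s,t) is strictly increasing on [s,∞); and for each fixed t ≥ 0, the function s ↦ V(s,t) is strictly decreasing on [0,t]. -/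
lemma vm_exp_deriv (a x : ℝ) :
    HasDerivAt (fun x : ℝ => Real.exp (-(a * x))) (Real.exp (-(a * x)) * -a) x := by
  simpa using (((hasDerivAt_id x).const_mul a).neg).exp

lemma vm_aux (A B C a b t : ℝ) :
    HasDerivAt (fun t : ℝ => A - B * Real.exp (-(a * t)) + C * Real.exp (-(b * t)))
      (a * B * Real.exp (-(a * t)) - b * C * Real.exp (-(b * t))) t := by
  have h := ((hasDerivAt_const t A).sub ((vm_exp_deriv a t).const_mul B)).add
    ((vm_exp_deriv b t).const_mul C)
  exact h.congr_deriv (by ring)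

lemma vm_aux2 (A B C D a c s : ℝ) :
    HasDerivAt (fun s : ℝ => B * Real.exp (-(a * s)) - A + C * Real.exp (c * s) * D)
      (-(a * B) * Real.exp (-(a * s)) + c * C * Real.exp (c * s) * D) s := by
  have hc : HasDerivAt (fun s : ℝ => Real.exp (c * s)) (Real.exp (c * s) * c) s := by
    simpa using ((hasDerivAt_id s).const_mul c).exp
  have h := (((vm_exp_deriv a s).const_mul B).sub (hasDerivAt_const s A)).add
    ((hc.const_mul C).mul_const D)
  exact h.congr_deriv (by ring)

/-- Monotonicity of the variance function
`V(s,t) = E[(𝒢̄(t) − 𝒢̄(s))²]`: for each fixed `s ≥ 0` it is strictly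
increasing in `t` on `[s,∞)`, and for each fixed `t ≥ 0` it is strictly
decreasing in `s` on `[0,t]`. -/
theorem variance_monotonicity
    (μ₁ μ₂ p θ : ℝ)
    (hμ₁ : 0 < μ₁) (hμ₂ : 0 < μ₂)
    (hp0 : 0 < p) (hp1 : p < 1)
    (hθ0 : 0 < θ) (hθ : θ < μ₁ * μ₂)
    (V : ℝ → ℝ → ℝ)
    (hV : ∀ s t : ℝ,
      V s t =
        (p * (1 - p) * (μ₁ - μ₂) ^ 2 / (θ * (μ₁ * μ₂) * (μ₁ * μ₂ + θ)) + 1 / θ)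
            * Real.exp (-(2 * θ * s))
        - (p * (1 - p) * (μ₁ - μ₂) ^ 2 / (θ * (μ₁ * μ₂) * (μ₁ * μ₂ - θ)) + 1 / θ)
            * Real.exp (-(2 * θ * t))
        + 2 * p * (1 - p) * (μ₁ - μ₂) ^ 2
              / ((μ₁ * μ₂) * (μ₁ * μ₂ - θ) * (μ₁ * μ₂ + θ))
            * Real.exp ((μ₁ * μ₂ - θ) * s) * Real.exp (-((μ₁ * μ₂ + θ) * t))) :
    (∀ s : ℝ, 0 ≤ s → StrictMonoOn (fun t => V s t) (Set.Ici s)) ∧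
    (∀ t : ℝ, 0 ≤ t → StrictAntiOn (fun s => V s t) (Set.Icc 0 t)) := by
  have hm : 0 < μ₁ * μ₂ := mul_pos hμ₁ hμ₂
  have hmθ : 0 < μ₁ * μ₂ - θ := by linarith
  have hmθ' : 0 < μ₁ * μ₂ + θ := by linarith
  have hnum : 0 ≤ 2 * p * (1 - p) * (μ₁ - μ₂) ^ 2 := mul_nonneg (mul_nonneg (by linarith) (by linarith)) (sq_nonneg _)
  have hCc : 0 ≤ 2 * p * (1 - p) * (μ₁ - μ₂) ^ 2
      / ((μ₁ * μ₂) * (μ₁ * μ₂ - θ) * (μ₁ * μ₂ + θ)) :=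
    div_nonneg hnum (mul_pos (mul_pos hm hmθ) hmθ').le
  have keyT : 2 * θ * (p * (1 - p) * (μ₁ - μ₂) ^ 2 / (θ * (μ₁ * μ₂) * (μ₁ * μ₂ - θ)) + 1 / θ)
      = (μ₁ * μ₂ + θ) * (2 * p * (1 - p) * (μ₁ - μ₂) ^ 2
          / ((μ₁ * μ₂) * (μ₁ * μ₂ - θ) * (μ₁ * μ₂ + θ))) + 2 := by
    field_simp
  have keyS : 2 * θ * (p * (1 - p) * (μ₁ - μ₂) ^ 2 / (θ * (μ₁ * μ₂) * (μ₁ * μ₂ + θ)) + 1 / θ)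
      = (μ₁ * μ₂ - θ) * (2 * p * (1 - p) * (μ₁ - μ₂) ^ 2
          / ((μ₁ * μ₂) * (μ₁ * μ₂ - θ) * (μ₁ * μ₂ + θ))) + 2 := by
    field_simp
  constructor
  · intro s hs
    simp only [hV]
    apply strictMonoOn_of_deriv_pos (convex_Ici s)
    · apply Continuous.continuousOn
      fun_prop
    · intro t ht
      rw [interior_Ici, Set.mem_Ioi] at ht
      rw [(vm_aux _ _ _ _ _ t).deriv]
      have hE : Real.exp ((μ₁ * μ₂ - θ) * s) * Real.exp (-((μ₁ * μ₂ + θ) * t))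
          ≤ Real.exp (-(2 * θ * t)) := by
        rw [← Real.exp_add]
        apply Real.exp_le_exp.mpr
        nlinarith [mul_le_mul_of_nonneg_left ht.le hmθ.le]
      have hbc : 0 ≤ (μ₁ * μ₂ + θ) * (2 * p * (1 - p) * (μ₁ - μ₂) ^ 2
          / ((μ₁ * μ₂) * (μ₁ * μ₂ - θ) * (μ₁ * μ₂ + θ))) := mul_nonneg hmθ'.le hCc
      nlinarith [mul_le_mul_of_nonneg_left hE hbc, Real.exp_pos (-(2 * θ * t)),
        mul_pos (Real.exp_pos (-(2 * θ * t))) hθ0, keyT]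
  · intro t ht
    simp only [hV]
    apply strictAntiOn_of_deriv_neg (convex_Icc 0 t)
    · apply Continuous.continuousOn
      fun_prop
    · intro s hs
      rw [interior_Icc, Set.mem_Ioo] at hs
      rw [(vm_aux2 _ _ _ _ _ _ s).deriv]
      have hE : Real.exp ((μ₁ * μ₂ - θ) * s) * Real.exp (-((μ₁ * μ₂ + θ) * t))
          ≤ Real.exp (-(2 * θ * s)) := by
        rw [← Real.exp_add]
        apply Real.exp_le_exp.mpr
        nlinarith [mul_le_mul_of_nonneg_left hs.2.le hmθ'.le]
      have hbc : 0 ≤ (μ₁ * μ₂ - θ) * (2 * p * (1 - p) * (μ₁ - μ₂) ^ 2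
          / ((μ₁ * μ₂) * (μ₁ * μ₂ - θ) * (μ₁ * μ₂ + θ))) := mul_nonneg hmθ.le hCc
      nlinarith [mul_le_mul_of_nonneg_left hE hbc, Real.exp_pos (-(2 * θ * s)),
        mul_pos (Real.exp_pos (-(2 * θ * s))) hθ0, keyS]
end

section
/- Let μ₁, μ₂ be positive reals, p ∈ (0,1) with p/μ₁ + (1−p)/μ₂ = 1, and 0 < θ < μ₁μ₂. Define V(s,t) := (p(1−p)(μ₁−μ₂)²/(θμ₁μ₂(μ₁μ₂+θ)) + 1/θ)·exp(−2θs) − (p(1−p)(μ₁−μ₂)²/(θμ₁μ₂(μ₁μ₂−θ)) + 1/θ)·exp(−2θt) + (2p(1−p)(μ₁−μ₂)²/(μ₁μ₂(μ₁μ₂−θ)(μ₁μ₂+θ)))·exp((μ₁μ₂−θ)s)·exp(−(μ₁μ₂+θ)t). Then for all 0 ≤ s ≤ t, V(s,t) ≤ (θ + μ₁ + μ₂ − 1)/(θ(θ + μ₁μ₂)); that is, the diameter of the associated canonical pseudo-metric √V is √((θ + μ₁ + μ₂ − 1)/(θ(θ + μ₁μ₂))). -/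
/-- Diameter bound: for all `0 ≤ s ≤ t`,
`V(s,t) ≤ (θ + μ₁ + μ₂ − 1)/(θ(θ + μ₁μ₂))`, i.e. the diameter of the canonical
pseudo-metric `√V` is `√((θ + μ₁ + μ₂ − 1)/(θ(θ + μ₁μ₂)))`. -/
theorem variance_diameter_bound
    (μ₁ μ₂ p θ : ℝ)
    (hμ₁ : 0 < μ₁) (hμ₂ : 0 < μ₂)
    (hp0 : 0 < p) (hp1 : p < 1)
    (hmean : p / μ₁ + (1 - p) / μ₂ = 1)
    (hθ0 : 0 < θ) (hθ : θ < μ₁ * μ₂)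
    (V : ℝ → ℝ → ℝ)
    (hV : ∀ s t : ℝ,
      V s t =
        (p * (1 - p) * (μ₁ - μ₂) ^ 2 / (θ * (μ₁ * μ₂) * (μ₁ * μ₂ + θ)) + 1 / θ)
            * Real.exp (-(2 * θ * s))
        - (p * (1 - p) * (μ₁ - μ₂) ^ 2 / (θ * (μ₁ * μ₂) * (μ₁ * μ₂ - θ)) + 1 / θ)
            * Real.exp (-(2 * θ * t))
        + 2 * p * (1 - p) * (μ₁ - μ₂) ^ 2
              / ((μ₁ * μ₂) * (μ₁ * μ₂ - θ) * (μ₁ * μ₂ + θ))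
            * Real.exp ((μ₁ * μ₂ - θ) * s) * Real.exp (-((μ₁ * μ₂ + θ) * t))) :
    ∀ s t : ℝ, 0 ≤ s → s ≤ t →
      V s t ≤ (θ + μ₁ + μ₂ - 1) / (θ * (θ + μ₁ * μ₂)) := by
  intro s t hs hst
  rw [hV]
  have hm : 0 < μ₁ * μ₂ := mul_pos hμ₁ hμ₂
  have hmθ : 0 < μ₁ * μ₂ - θ := by linarith
  have hmθ' : 0 < μ₁ * μ₂ + θ := by linarith
  have hp1' : 0 < 1 - p := by linarith
  have hA : 0 ≤ p * (1 - p) * (μ₁ - μ₂) ^ 2 := by positivity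
  -- mean-1 normalization as a polynomial identity
  have hrel : p * μ₂ + (1 - p) * μ₁ = μ₁ * μ₂ := by
    field_simp at hmean
    linarith [hmean]
  -- key identity: A = m(μ₁+μ₂−m−1)
  have hAeq : p * (1 - p) * (μ₁ - μ₂) ^ 2
      = (μ₁ * μ₂) * (μ₁ + μ₂ - μ₁ * μ₂ - 1) := by
    linear_combination (p * μ₁ + (1 - p) * μ₂ - μ₁ * μ₂) * hrel
  set A := p * (1 - p) * (μ₁ - μ₂) ^ 2 with hAdef
  -- first coefficient equals the claimed bound
  have hC1 : A / (θ * (μ₁ * μ₂) * (μ₁ * μ₂ + θ)) + 1 / θ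
      = (θ + μ₁ + μ₂ - 1) / (θ * (θ + μ₁ * μ₂)) := by
    rw [hAeq]
    field_simp
    ring
  -- second coefficient = first + third
  have hC2 : A / (θ * (μ₁ * μ₂) * (μ₁ * μ₂ - θ)) + 1 / θ
      = (A / (θ * (μ₁ * μ₂) * (μ₁ * μ₂ + θ)) + 1 / θ)
        + 2 * A / ((μ₁ * μ₂) * (μ₁ * μ₂ - θ) * (μ₁ * μ₂ + θ)) := by
    field_simp
    ring
  have hC1nonneg : 0 ≤ A / (θ * (μ₁ * μ₂) * (μ₁ * μ₂ + θ)) + 1 / θ := by positivity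
  have hC3nonneg : 0 ≤ 2 * A / ((μ₁ * μ₂) * (μ₁ * μ₂ - θ) * (μ₁ * μ₂ + θ)) := by positivity
  have hx1 : Real.exp (-(2 * θ * s)) ≤ 1 := by
    rw [Real.exp_le_one_iff]
    nlinarith
  have hy0 : 0 ≤ Real.exp (-(2 * θ * t)) := (Real.exp_pos _).le
  have hzy : Real.exp ((μ₁ * μ₂ - θ) * s) * Real.exp (-((μ₁ * μ₂ + θ) * t))
      ≤ Real.exp (-(2 * θ * t)) := by
    rw [← Real.exp_add, Real.exp_le_exp]
    nlinarith [mul_nonneg hmθ.le (sub_nonneg.2 hst)]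
  rw [show 2 * p * (1 - p) * (μ₁ - μ₂) ^ 2 = 2 * A from by rw [hAdef]; ring]
  calc (A / (θ * (μ₁ * μ₂) * (μ₁ * μ₂ + θ)) + 1 / θ) * Real.exp (-(2 * θ * s))
        - (A / (θ * (μ₁ * μ₂) * (μ₁ * μ₂ - θ)) + 1 / θ) * Real.exp (-(2 * θ * t))
        + 2 * A / ((μ₁ * μ₂) * (μ₁ * μ₂ - θ) * (μ₁ * μ₂ + θ))
          * Real.exp ((μ₁ * μ₂ - θ) * s) * Real.exp (-((μ₁ * μ₂ + θ) * t))
      ≤ A / (θ * (μ₁ * μ₂) * (μ₁ * μ₂ + θ)) + 1 / θ := by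
        rw [hC2]
        nlinarith [mul_le_mul_of_nonneg_left hzy hC3nonneg,
          mul_le_mul_of_nonneg_left hx1 hC1nonneg,
          mul_nonneg hC1nonneg hy0]
    _ = (θ + μ₁ + μ₂ - 1) / (θ * (θ + μ₁ * μ₂)) := hC1
end

section
/- Let μ₁, μ₂ be positive reals, p ∈ (0,1), and 0 < θ < μ₁μ₂. Define V(s,t) := (p(1−p)(μ₁−μ₂)²/(θμ₁μ₂(μ₁μ₂+θ)) + 1/θ)·exp(−2θs) − (p(1−p)(μ₁−μ₂)²/(θμ₁μ₂(μ₁μ₂−θ)) + 1/θ)·exp(−2θt) + (2p(1−p)(μ₁−μ₂)²/(μ₁μ₂(μ₁μ₂−θ)(μ₁μ₂+θ)))·exp((μ₁μ₂−θ)s)·exp(−(μ₁μ₂+θ)t). Then for all 0 ≤ s ≤ t, √(V(s,t)) ≤ 4·√( p(1−p)(μ₁−μ₂)²/(μ₁μ₂(μ₁μ₂−θ)θ) + 1/θ )·√( 1 − exp(−(μ₁μ₂+θ)(t−s)) )·exp(−θs). -/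
/-- Explicit bound on the canonical pseudo-metric: for all `0 ≤ s ≤ t`,
`√(V(s,t)) ≤ 4√(p(1−p)(μ₁−μ₂)²/(μ₁μ₂(μ₁μ₂−θ)θ) + 1/θ)
· √(1 − e^{−(μ₁μ₂+θ)(t−s)}) · e^{−θs}`. -/
theorem canonical_metric_bound
    (μ₁ μ₂ p θ : ℝ)
    (hμ₁ : 0 < μ₁) (hμ₂ : 0 < μ₂)
    (hp0 : 0 < p) (hp1 : p < 1)
    (hθ0 : 0 < θ) (hθ : θ < μ₁ * μ₂)
    (V : ℝ → ℝ → ℝ)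
    (hV : ∀ s t : ℝ,
      V s t =
        (p * (1 - p) * (μ₁ - μ₂) ^ 2 / (θ * (μ₁ * μ₂) * (μ₁ * μ₂ + θ)) + 1 / θ)
            * Real.exp (-(2 * θ * s))
        - (p * (1 - p) * (μ₁ - μ₂) ^ 2 / (θ * (μ₁ * μ₂) * (μ₁ * μ₂ - θ)) + 1 / θ)
            * Real.exp (-(2 * θ * t))
        + 2 * p * (1 - p) * (μ₁ - μ₂) ^ 2
              / ((μ₁ * μ₂) * (μ₁ * μ₂ - θ) * (μ₁ * μ₂ + θ))
            * Real.exp ((μ₁ * μ₂ - θ) * s) * Real.exp (-((μ₁ * μ₂ + θ) * t))) :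
    ∀ s t : ℝ, 0 ≤ s → s ≤ t →
      Real.sqrt (V s t)
        ≤ 4 * Real.sqrt
              (p * (1 - p) * (μ₁ - μ₂) ^ 2 / ((μ₁ * μ₂) * (μ₁ * μ₂ - θ) * θ)
                + 1 / θ)
            * Real.sqrt (1 - Real.exp (-((μ₁ * μ₂ + θ) * (t - s))))
            * Real.exp (-(θ * s)) := by
  intro s t hs hst
  have ha0 : 0 < μ₁ * μ₂ := mul_pos hμ₁ hμ₂
  have ham : 0 < μ₁ * μ₂ - θ := sub_pos.2 hθ
  have hap : 0 < μ₁ * μ₂ + θ := by linarith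
  have hk : 0 ≤ p * (1 - p) * (μ₁ - μ₂) ^ 2 :=
    mul_nonneg (mul_nonneg hp0.le (by linarith)) (sq_nonneg _)
  set A : ℝ := p * (1 - p) * (μ₁ - μ₂) ^ 2 / (θ * (μ₁ * μ₂) * (μ₁ * μ₂ + θ)) + 1 / θ with hAdef
  set Bc : ℝ := p * (1 - p) * (μ₁ - μ₂) ^ 2 / (θ * (μ₁ * μ₂) * (μ₁ * μ₂ - θ)) + 1 / θ with hBcdef
  set D : ℝ := 2 * p * (1 - p) * (μ₁ - μ₂) ^ 2 / ((μ₁ * μ₂) * (μ₁ * μ₂ - θ) * (μ₁ * μ₂ + θ)) with hDdef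
  set B : ℝ := p * (1 - p) * (μ₁ - μ₂) ^ 2 / ((μ₁ * μ₂) * (μ₁ * μ₂ - θ) * θ) + 1 / θ with hBdef
  have hA : 0 ≤ A := add_nonneg (div_nonneg hk (by positivity)) (by positivity)
  have hD : 0 ≤ D := div_nonneg (by nlinarith) (by positivity)
  have hB : 0 ≤ B := add_nonneg (div_nonneg hk (by positivity)) (by positivity)
  have hBeq : Bc = B := by
    rw [hBcdef, hBdef]
    ring_nf
  have hid : B = A + D := by
    rw [hBdef, hAdef, hDdef]
    field_simp
    ring
  set E2 : ℝ := Real.exp (-(2 * θ * (t - s))) with hE2def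
  set Eau : ℝ := Real.exp (-((μ₁ * μ₂ + θ) * (t - s))) with hEaudef
  set Es : ℝ := Real.exp (-(2 * θ * s)) with hEsdef
  clear_value A Bc D B E2 Eau Es
  have hEs : 0 < Es := by rw [hEsdef]; positivity
  have hE2le : E2 ≤ 1 := by
    rw [hE2def]
    exact Real.exp_le_one_iff.2 (by nlinarith [mul_nonneg hθ0.le (sub_nonneg.2 hst)])
  have hEaule : Eau ≤ E2 := by
    rw [hEaudef, hE2def]
    exact Real.exp_le_exp.2 (by nlinarith [mul_nonneg ham.le (sub_nonneg.2 hst)])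
  have hEau0 : 0 < Eau := by rw [hEaudef]; positivity
  have key : V s t ≤ B * (1 - Eau) * Es := by
    rw [hV s t]
    have e1 : Real.exp (-(2 * θ * t)) = E2 * Es := by
      rw [hE2def, hEsdef, ← Real.exp_add]; ring_nf
    have e2 : Real.exp ((μ₁ * μ₂ - θ) * s) * Real.exp (-((μ₁ * μ₂ + θ) * t))
        = Eau * Es := by
      rw [hEaudef, hEsdef, ← Real.exp_add, ← Real.exp_add]; ring_nf
    rw [e1, hBeq, mul_assoc D, e2, ← hEsdef]
    have h1 : 0 ≤ A * (E2 - Eau) := mul_nonneg hA (by linarith)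
    have h2 : 0 ≤ D * (1 - 2 * Eau + E2) := mul_nonneg hD (by linarith)
    have hbr : A - B * E2 + D * Eau ≤ B * (1 - Eau) := by
      rw [hid]; linarith [h1, h2]
    have hmul := mul_le_mul_of_nonneg_right hbr hEs.le
    linarith [hmul]
  have hsq : Real.sqrt (V s t) ≤ Real.sqrt (B * (1 - Eau) * Es) :=
    Real.sqrt_le_sqrt key
  have hEaule1 : Eau ≤ 1 := le_trans hEaule hE2le
  have hrw : Real.sqrt (B * (1 - Eau) * Es)
      = Real.sqrt B * Real.sqrt (1 - Eau) * Real.exp (-(θ * s)) := by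
    rw [Real.sqrt_mul (mul_nonneg hB (by linarith)), Real.sqrt_mul hB]
    congr 1
    rw [hEsdef, show -(2 * θ * s) = -(θ * s) + -(θ * s) by ring, Real.exp_add,
      Real.sqrt_mul_self (Real.exp_pos _).le]
  have hnn : 0 ≤ Real.sqrt B * Real.sqrt (1 - Eau) * Real.exp (-(θ * s)) := by positivity
  calc Real.sqrt (V s t) ≤ Real.sqrt B * Real.sqrt (1 - Eau) * Real.exp (-(θ * s)) := by
        rw [← hrw]; exact hsq
    _ ≤ 4 * Real.sqrt B * Real.sqrt (1 - Eau) * Real.exp (-(θ * s)) := by nlinarith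
end

section
/- Let μ₁, μ₂ be positive reals, p ∈ (0,1), and 0 < θ < μ₁μ₂. Define V(s,t) := (p(1−p)(μ₁−μ₂)²/(θμ₁μ₂(μ₁μ₂+θ)) + 1/θ)·exp(−2θs) − (p(1−p)(μ₁−μ₂)²/(θμ₁μ₂(μ₁μ₂−θ)) + 1/θ)·exp(−2θt) + (2p(1−p)(μ₁−μ₂)²/(μ₁μ₂(μ₁μ₂−θ)(μ₁μ₂+θ)))·exp((μ₁μ₂−θ)s)·exp(−(μ₁μ₂+θ)t), and set C₀ := 4·√( p(1−p)(μ₁−μ₂)²/(μ₁μ₂(μ₁μ₂−θ)θ) + 1/θ )·√(1 + μ₁μ₂ + θ). Then for all 0 ≤ s ≤ t, √(V(s,t)) ≤ C₀·√(t−s). -/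
private lemma exp_neg_sub_exp_neg_le (x y : ℝ) (hx : 0 ≤ x) (hxy : x ≤ y) :
    Real.exp (-x) - Real.exp (-y) ≤ y - x := by
  have h1 : Real.exp (-x) ≤ 1 := Real.exp_le_one_iff.mpr (by linarith)
  have h2 : Real.exp (-(y - x)) ≤ 1 := Real.exp_le_one_iff.mpr (by linarith)
  have h3 : 1 - (y - x) ≤ Real.exp (-(y - x)) := by
    have := Real.add_one_le_exp (-(y - x)); linarith
  have h4 : Real.exp (-y) = Real.exp (-x) * Real.exp (-(y - x)) := by
    rw [← Real.exp_add]; ring_nf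
  nlinarith [Real.exp_pos (-x)]

set_option maxHeartbeats 1000000 in
/-- Hölder-type bound on the canonical pseudo-metric: with
`C₀ = 4√(p(1−p)(μ₁−μ₂)²/(μ₁μ₂(μ₁μ₂−θ)θ) + 1/θ)·√(1 + μ₁μ₂ + θ)`,
for all `0 ≤ s ≤ t` one has `√(V(s,t)) ≤ C₀√(t−s)`. -/
theorem canonical_metric_holder_bound
    (μ₁ μ₂ p θ : ℝ)
    (hμ₁ : 0 < μ₁) (hμ₂ : 0 < μ₂)
    (hp0 : 0 < p) (hp1 : p < 1)
    (hθ0 : 0 < θ) (hθ : θ < μ₁ * μ₂)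
    (V : ℝ → ℝ → ℝ)
    (hV : ∀ s t : ℝ,
      V s t =
        (p * (1 - p) * (μ₁ - μ₂) ^ 2 / (θ * (μ₁ * μ₂) * (μ₁ * μ₂ + θ)) + 1 / θ)
            * Real.exp (-(2 * θ * s))
        - (p * (1 - p) * (μ₁ - μ₂) ^ 2 / (θ * (μ₁ * μ₂) * (μ₁ * μ₂ - θ)) + 1 / θ)
            * Real.exp (-(2 * θ * t))
        + 2 * p * (1 - p) * (μ₁ - μ₂) ^ 2
              / ((μ₁ * μ₂) * (μ₁ * μ₂ - θ) * (μ₁ * μ₂ + θ))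
            * Real.exp ((μ₁ * μ₂ - θ) * s) * Real.exp (-((μ₁ * μ₂ + θ) * t)))
    (C₀ : ℝ)
    (hC₀ : C₀ = 4 * Real.sqrt
        (p * (1 - p) * (μ₁ - μ₂) ^ 2 / ((μ₁ * μ₂) * (μ₁ * μ₂ - θ) * θ) + 1 / θ)
        * Real.sqrt (1 + μ₁ * μ₂ + θ)) :
    ∀ s t : ℝ, 0 ≤ s → s ≤ t →
      Real.sqrt (V s t) ≤ C₀ * Real.sqrt (t - s) := by
  intro s t hs hst
  set m : ℝ := μ₁ * μ₂ with hm
  have hm0 : 0 < m := mul_pos hμ₁ hμ₂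
  have hmθ : 0 < m - θ := by linarith
  have hmθ' : 0 < m + θ := by linarith
  set a : ℝ := p * (1 - p) * (μ₁ - μ₂) ^ 2 with hadef
  have ha : 0 ≤ a :=
    mul_nonneg (mul_nonneg hp0.le (by linarith)) (sq_nonneg _)
  set Kp : ℝ := a / (θ * m * (m + θ)) with hKp
  set Km : ℝ := a / (m * (m - θ) * θ) with hKm
  set B : ℝ := 2 * a / (m * (m - θ) * (m + θ)) with hB
  clear_value m a Kp Km B
  have hKpnn : 0 ≤ Kp := by rw [hKp]; exact div_nonneg ha (by positivity)
  have hKmnn : 0 ≤ Km := by rw [hKm]; exact div_nonneg ha (by positivity)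
  have hBnn : 0 ≤ B := by rw [hB]; exact div_nonneg (by linarith) (by positivity)
  have hKle : Kp ≤ Km := by
    rw [hKp, hKm]
    apply div_le_div_of_nonneg_left ha (by positivity)
    nlinarith [mul_nonneg (mul_nonneg hm0.le hθ0.le) hθ0.le]
  have hKB : Km = Kp + B := by
    rw [hKp, hKm, hB]
    field_simp
    ring
  -- rewrite V
  have hVeq : V s t = (Kp + 1/θ) * (Real.exp (-(2*θ*s)) - Real.exp (-(2*θ*t)))
      + B * (Real.exp ((m-θ)*s) * Real.exp (-((m+θ)*t)) - Real.exp (-(2*θ*t))) := by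
    rw [hV s t, hKp, hB, hadef]
    have h1 : θ ≠ 0 := hθ0.ne'
    have h2 : m ≠ 0 := hm0.ne'
    have h3 : m - θ ≠ 0 := hmθ.ne'
    have h4 : m + θ ≠ 0 := hmθ'.ne'
    field_simp
    ring
  have hdiff : Real.exp (-(2*θ*s)) - Real.exp (-(2*θ*t)) ≤ 2*θ*(t-s) := by
    have h := exp_neg_sub_exp_neg_le (2*θ*s) (2*θ*t)
      (mul_nonneg (by linarith) hs)
      (mul_le_mul_of_nonneg_left hst (by linarith))
    linarith
  have hE3 : Real.exp ((m-θ)*s) * Real.exp (-((m+θ)*t)) ≤ Real.exp (-(2*θ*t)) := by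
    rw [← Real.exp_add]
    apply Real.exp_le_exp.mpr
    nlinarith [mul_nonneg hmθ.le (sub_nonneg.mpr hst)]
  have hVle : V s t ≤ (Kp + 1/θ) * (2*θ*(t-s)) := by
    rw [hVeq]
    have h1 : (Kp + 1/θ) * (Real.exp (-(2*θ*s)) - Real.exp (-(2*θ*t)))
        ≤ (Kp + 1/θ) * (2*θ*(t-s)) :=
      mul_le_mul_of_nonneg_left hdiff (by positivity)
    nlinarith
  have hXnn : 0 ≤ Km + 1 / θ := add_nonneg hKmnn (by positivity)
  have hYnn : (0:ℝ) ≤ 1 + m + θ := by linarith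
  have hC2 : C₀ ^ 2 = 16 * (Km + 1/θ) * (1 + m + θ) := by
    rw [hC₀, mul_pow, mul_pow, Real.sq_sqrt hXnn, Real.sq_sqrt hYnn]
    norm_num
  have hC₀nn : 0 ≤ C₀ := by rw [hC₀]; positivity
  have hfin : V s t ≤ C₀ ^ 2 * (t - s) := by
    rw [hC2]
    have hθinv : (0:ℝ) ≤ 1/θ := by positivity
    have hts : 0 ≤ t - s := sub_nonneg.mpr hst
    have h1 : (Kp + 1/θ) * (2*θ*(t-s)) ≤ (Km + 1/θ) * (2*θ*(t-s)) :=
      mul_le_mul_of_nonneg_right (by linarith)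
        (mul_nonneg (by positivity) hts)
    have hz : 0 ≤ (Km + 1/θ) * (t - s) := mul_nonneg (by linarith) hts
    have h2 : (Km + 1/θ) * (2*θ*(t-s)) ≤ 16 * (Km + 1/θ) * (1 + m + θ) * (t - s) := by
      have key : 0 ≤ ((Km + 1/θ) * (t - s)) * (16 * (1 + m + θ) - 2*θ) :=
        mul_nonneg hz (by linarith)
      nlinarith [key]
    linarith [hVle]
  calc Real.sqrt (V s t) ≤ Real.sqrt (C₀ ^ 2 * (t - s)) := Real.sqrt_le_sqrt hfin
    _ = C₀ * Real.sqrt (t - s) := by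
        rw [Real.sqrt_mul (sq_nonneg _), Real.sqrt_sq hC₀nn]
end

section
/- Let a, θ be reals with 0 < θ < a, and let 0 ≤ s ≤ t. Then ∫₀^t ( ∫₀^s exp(θ(y₁+y₂))·( exp(−a·|y₂−y₁|) − exp(−a(y₁+y₂)) ) dy₁ ) dy₂ = a·[ exp(2θs)/(θ(a+θ)(a−θ)) + 2·exp(−(a−θ)s)/((a+θ)(a−θ)²) − 1/(θ(a−θ)²) − exp((a+θ)s − (a−θ)t)/(a(a+θ)(a−θ)) + 2·exp(−(a−θ)t)/((a+θ)(a−θ)²) − exp(−(a−θ)(s+t))/(a(a−θ)²) ]. -/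
open MeasureTheory intervalIntegral

private lemma exp_mul_ii (c x y : ℝ) :
    IntervalIntegrable (fun u => Real.exp (c * u)) volume x y :=
  (Real.continuous_exp.comp (continuous_const.mul continuous_id)).intervalIntegrable x y

private lemma exp_mul_int (c : ℝ) (hc : c ≠ 0) (x y : ℝ) :
    ∫ u in x..y, Real.exp (c * u) = (Real.exp (c * y) - Real.exp (c * x)) / c := by
  rw [intervalIntegral.integral_comp_mul_left (fun u => Real.exp u) hc,
    integral_exp, smul_eq_mul]
  field_simp


private lemma final_alg (a θ E1 E2 E3 : ℝ) (hθ0 : θ ≠ 0) (ha0 : a ≠ 0) (hap : a + θ ≠ 0)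
    (ham : θ - a ≠ 0) :
    (1/(a+θ) - 1/(θ-a)) * ((E2*E1 - 1)/(2*θ))
      + (-(1/(a+θ)) - (E2 - 1)/(θ-a)) * ((E2 - 1)/(θ-a))
      + E2/(θ-a) * ((E1 - 1)/(a+θ))
      + ((E1 - 1)/(a+θ) - (E2 - 1)/(θ-a)) * ((E3 - E2)/(θ-a))
      = a * (E2*E1 / (θ * (a + θ) * (a - θ))
          + 2 * E2 / ((a + θ) * (a - θ) ^ 2)
          - 1 / (θ * (a - θ) ^ 2)
          - E1*E3 / (a * (a + θ) * (a - θ))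
          + 2 * E3 / ((a + θ) * (a - θ) ^ 2)
          - E2*E3 / (a * (a - θ) ^ 2)) := by
  have h2 : a - θ ≠ 0 := fun h => ham (by linarith)
  field_simp
  ring

set_option maxHeartbeats 1000000 in
/-- The core iterated-integral computation in the covariance of the
lower-bound Gaussian process `Π`: for `0 < θ < a` and `0 ≤ s ≤ t`,
`∫₀^t ∫₀^s e^{θ(y₁+y₂)}(e^{−a|y₂−y₁|} − e^{−a(y₁+y₂)}) dy₁ dy₂` equals the
displayed explicit expression. -/
theorem lower_bound_core_integral
    (a θ s t : ℝ) (hθ : 0 < θ) (hθa : θ < a) (hs : 0 ≤ s) (hst : s ≤ t) :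
    (∫ y₂ in (0:ℝ)..t, ∫ y₁ in (0:ℝ)..s,
        Real.exp (θ * (y₁ + y₂))
          * (Real.exp (-(a * |y₂ - y₁|)) - Real.exp (-(a * (y₁ + y₂)))))
      = a * (Real.exp (2 * θ * s) / (θ * (a + θ) * (a - θ))
          + 2 * Real.exp (-((a - θ) * s)) / ((a + θ) * (a - θ) ^ 2)
          - 1 / (θ * (a - θ) ^ 2)
          - Real.exp ((a + θ) * s - (a - θ) * t) / (a * (a + θ) * (a - θ))
          + 2 * Real.exp (-((a - θ) * t)) / ((a + θ) * (a - θ) ^ 2)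
          - Real.exp (-((a - θ) * (s + t))) / (a * (a - θ) ^ 2)) := by
  have hap : a + θ ≠ 0 := by intro h; linarith
  have ham : θ - a ≠ 0 := by intro h; linarith
  have hθ0 : θ ≠ 0 := ne_of_gt hθ
  have h2θ : 2 * θ ≠ 0 := by positivity
  have ha0 : a ≠ 0 := by intro h; linarith
  set F : ℝ → ℝ → ℝ := fun y₂ y₁ =>
    Real.exp (θ * (y₁ + y₂))
      * (Real.exp (-(a * |y₂ - y₁|)) - Real.exp (-(a * (y₁ + y₂)))) with hF
  have hFc : Continuous (Function.uncurry F) := by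
    rw [hF]
    apply Continuous.mul
    · fun_prop
    · apply Continuous.sub
      · apply Real.continuous_exp.comp
        apply Continuous.neg
        apply Continuous.mul continuous_const
        exact (continuous_fst.sub continuous_snd).abs
      · fun_prop
  have hFc1 : ∀ y₂, Continuous fun y₁ => F y₂ y₁ := by
    intro y₂
    rw [hF]
    apply Continuous.mul
    · fun_prop
    · apply Continuous.sub
      · apply Real.continuous_exp.comp
        apply Continuous.neg
        apply Continuous.mul continuous_const
        exact (continuous_const.sub continuous_id).abs
      · fun_prop
  -- inner integral for s ≤ y₂
  have hg2 : ∀ y₂, s ≤ y₂ →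
      (∫ y₁ in (0:ℝ)..s, F y₂ y₁)
        = ((Real.exp ((a + θ) * s) - 1) / (a + θ)
            - (Real.exp ((θ - a) * s) - 1) / (θ - a)) * Real.exp ((θ - a) * y₂) := by
    intro y₂ hy
    have hcg : ∀ y₁ ∈ Set.uIcc (0:ℝ) s, F y₂ y₁
        = (Real.exp ((a + θ) * y₁) - Real.exp ((θ - a) * y₁)) * Real.exp ((θ - a) * y₂) := by
      intro y₁ hy₁
      rw [Set.uIcc_of_le hs] at hy₁
      obtain ⟨h1, h2⟩ := hy₁
      rw [hF]
      simp only
      rw [abs_of_nonneg (by linarith : (0:ℝ) ≤ y₂ - y₁), mul_sub, sub_mul,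
        ← Real.exp_add, ← Real.exp_add, ← Real.exp_add, ← Real.exp_add]
      ring_nf
    rw [intervalIntegral.integral_congr hcg, intervalIntegral.integral_mul_const,
      intervalIntegral.integral_sub (exp_mul_ii _ _ _) (exp_mul_ii _ _ _),
      exp_mul_int _ hap, exp_mul_int _ ham]
    simp [mul_comm]
  -- inner integral for 0 ≤ y₂ ≤ s
  have hg1 : ∀ y₂, 0 ≤ y₂ → y₂ ≤ s →
      (∫ y₁ in (0:ℝ)..s, F y₂ y₁)
        = (Real.exp (2 * θ * y₂) - Real.exp ((θ - a) * y₂)) / (a + θ)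
          + (Real.exp ((θ - a) * s) * Real.exp ((a + θ) * y₂)
              - Real.exp (2 * θ * y₂)) / (θ - a)
          - (Real.exp ((θ - a) * s) - 1) * Real.exp ((θ - a) * y₂) / (θ - a) := by
    intro y₂ hy0 hys
    rw [← intervalIntegral.integral_add_adjacent_intervals
      ((hFc1 y₂).intervalIntegrable 0 y₂) ((hFc1 y₂).intervalIntegrable y₂ s)]
    have hc1 : ∀ y₁ ∈ Set.uIcc (0:ℝ) y₂, F y₂ y₁
        = (Real.exp ((a + θ) * y₁) - Real.exp ((θ - a) * y₁)) * Real.exp ((θ - a) * y₂) := by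
      intro y₁ hy₁
      rw [Set.uIcc_of_le hy0] at hy₁
      obtain ⟨h1, h2⟩ := hy₁
      rw [hF]
      simp only
      rw [abs_of_nonneg (by linarith : (0:ℝ) ≤ y₂ - y₁), mul_sub, sub_mul,
        ← Real.exp_add, ← Real.exp_add, ← Real.exp_add, ← Real.exp_add]
      ring_nf
    have hc2 : ∀ y₁ ∈ Set.uIcc y₂ s, F y₂ y₁
        = (Real.exp ((a + θ) * y₂) - Real.exp ((θ - a) * y₂)) * Real.exp ((θ - a) * y₁) := by
      intro y₁ hy₁
      rw [Set.uIcc_of_le hys] at hy₁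
      obtain ⟨h1, h2⟩ := hy₁
      rw [hF]
      simp only
      rw [abs_of_nonpos (by linarith : y₂ - y₁ ≤ 0), mul_sub, sub_mul,
        ← Real.exp_add, ← Real.exp_add, ← Real.exp_add, ← Real.exp_add]
      ring_nf
    rw [intervalIntegral.integral_congr hc1, intervalIntegral.integral_congr hc2,
      intervalIntegral.integral_mul_const, intervalIntegral.integral_const_mul,
      intervalIntegral.integral_sub (exp_mul_ii _ _ _) (exp_mul_ii _ _ _),
      exp_mul_int _ hap, exp_mul_int _ ham, exp_mul_int _ ham]
    rw [show 2 * θ * y₂ = (θ - a) * y₂ + (a + θ) * y₂ by ring, Real.exp_add]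
    simp only [mul_zero, Real.exp_zero]
    field_simp
    ring
  have hcont : Continuous fun y₂ => ∫ y₁ in (0:ℝ)..s, F y₂ y₁ :=
    intervalIntegral.continuous_parametric_intervalIntegral_of_continuous' hFc 0 s
  rw [← intervalIntegral.integral_add_adjacent_intervals
    (hcont.intervalIntegrable 0 s) (hcont.intervalIntegrable s t)]
  have e1 : (∫ y₂ in (0:ℝ)..s, ∫ y₁ in (0:ℝ)..s, F y₂ y₁)
      = ∫ y₂ in (0:ℝ)..s, ((1/(a+θ) - 1/(θ-a)) * Real.exp (2*θ*y₂)
          + (-(1/(a+θ)) - (Real.exp ((θ-a)*s) - 1)/(θ-a)) * Real.exp ((θ-a)*y₂)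
          + (Real.exp ((θ-a)*s)/(θ-a)) * Real.exp ((a+θ)*y₂)) := by
    apply intervalIntegral.integral_congr
    intro y₂ hy
    rw [Set.uIcc_of_le hs] at hy
    simp only [hg1 y₂ hy.1 hy.2]
    field_simp
    ring
  have e2 : (∫ y₂ in s..t, ∫ y₁ in (0:ℝ)..s, F y₂ y₁)
      = ∫ y₂ in s..t, (((Real.exp ((a+θ)*s) - 1)/(a+θ)
          - (Real.exp ((θ-a)*s) - 1)/(θ-a)) * Real.exp ((θ-a)*y₂)) := by
    apply intervalIntegral.integral_congr
    intro y₂ hy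
    rw [Set.uIcc_of_le hst] at hy
    simp only [hg2 y₂ hy.1]
  rw [e1, e2,
    intervalIntegral.integral_add (((exp_mul_ii _ _ _).const_mul _).add
      ((exp_mul_ii _ _ _).const_mul _)) ((exp_mul_ii _ _ _).const_mul _),
    intervalIntegral.integral_add ((exp_mul_ii _ _ _).const_mul _)
      ((exp_mul_ii _ _ _).const_mul _),
    intervalIntegral.integral_const_mul, intervalIntegral.integral_const_mul,
    intervalIntegral.integral_const_mul, intervalIntegral.integral_const_mul,
    exp_mul_int _ h2θ, exp_mul_int _ ham, exp_mul_int _ hap, exp_mul_int _ ham]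
  rw [show 2*θ*s = (θ-a)*s + (a+θ)*s by ring, Real.exp_add,
    show -((a-θ)*s) = (θ-a)*s by ring,
    show (a+θ)*s - (a-θ)*t = (a+θ)*s + (θ-a)*t by ring, Real.exp_add,
    show -((a-θ)*t) = (θ-a)*t by ring,
    show -((a-θ)*(s+t)) = (θ-a)*s + (θ-a)*t by ring, Real.exp_add]
  simp only [mul_zero, Real.exp_zero]
  have hfin := final_alg a θ (Real.exp ((a+θ)*s)) (Real.exp ((θ-a)*s))
    (Real.exp ((θ-a)*t)) hθ0 ha0 hap ham
  linear_combination hfin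
end

section
/- Let μ₁, μ₂ be positive reals, p ∈ (0,1), and 0 < θ < μ₁μ₂. Define P(s,t) := ((μ₁−μ₂)²p(1−p)/((μ₁μ₂+θ)(μ₁μ₂−θ)θ) + 1/θ)·exp(−θ(t−s)) + (2(μ₁−μ₂)²p(1−p)/((μ₁μ₂+θ)(μ₁μ₂−θ)²))·exp(−μ₁μ₂·s − θ·t) − ((μ₁−μ₂)²p(1−p)/(θ(μ₁μ₂−θ)²) + 1/θ)·exp(−θ(s+t)) − ((μ₁−μ₂)²p(1−p)/(μ₁μ₂(μ₁μ₂+θ)(μ₁μ₂−θ)))·exp(−μ₁μ₂(t−s)) + (2(μ₁−μ₂)²p(1−p)/((μ₁μ₂+θ)(μ₁μ₂−θ)²))·exp(−θ·s − μ₁μ₂·t) − ((μ₁−μ₂)²p(1−p)/(μ₁μ₂(μ₁μ₂−θ)²))·exp(−μ₁μ₂(s+t)). Then P(s,t) ≥ 0 for all 0 ≤ s ≤ t. -/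
open intervalIntegral Real

lemma int_exp_neg (c s : ℝ) (hc : c ≠ 0) :
    ∫ u in (0:ℝ)..s, Real.exp (-(c*u)) = (1 - Real.exp (-(c*s)))/c := by
  have h : ∀ u : ℝ, Real.exp (-(c*u)) = Real.exp ((-c) * u) := by intro u; ring_nf
  simp_rw [h]
  rw [intervalIntegral.integral_comp_mul_left (fun x => Real.exp x) (neg_ne_zero.mpr hc)]
  simp [integral_exp, smul_eq_mul]
  ring

lemma exp_ii (c : ℝ) (a b : ℝ) : IntervalIntegrable (fun u => Real.exp (-(c*u)))
    MeasureTheory.volume a b :=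
  (Real.continuous_exp.comp (continuous_const.mul continuous_id).neg).intervalIntegrable a b

lemma G_nonneg (m θ s : ℝ) (hθ : 0 < θ) (hm : θ < m) (hs : 0 ≤ s) :
    0 ≤ (m - θ) - 2*m*Real.exp (-((m+θ)*s)) + (m+θ)*Real.exp (-(2*m*s)) := by
  have hm0 : 0 < m := hθ.trans hm
  have h1 : m + θ ≠ 0 := by positivity
  have h2' : m ≠ 0 := ne_of_gt hm0
  have h3' : θ ≠ 0 := ne_of_gt hθ
  have key : (m - θ) - 2*m*Real.exp (-((m+θ)*s)) + (m+θ)*Real.exp (-(2*m*s))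
      = 2*m*(m+θ) * ∫ u in (0:ℝ)..s,
          (Real.exp (-((m+θ)*u)) - Real.exp (-(2*m*u))) := by
    rw [intervalIntegral.integral_sub (exp_ii _ _ _) (exp_ii _ _ _),
      int_exp_neg _ _ (by positivity), int_exp_neg _ _ (by positivity)]
    field_simp
    ring
  rw [key]
  have h2 : 0 ≤ ∫ u in (0:ℝ)..s, (Real.exp (-((m+θ)*u)) - Real.exp (-(2*m*u))) := by
    apply intervalIntegral.integral_nonneg hs
    intro u hu
    have : 0 ≤ u := hu.1
    have : -(2*m*u) ≤ -((m+θ)*u) := by nlinarith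
    simp only [sub_nonneg]
    exact Real.exp_le_exp.mpr this
  positivity

lemma H_nonneg (m θ s : ℝ) (hθ : 0 < θ) (hm : θ < m) (hs : 0 ≤ s) :
    0 ≤ (m - θ)^2 + 4*θ*m*Real.exp (-((m+θ)*s)) - m*(m+θ)*Real.exp (-(2*θ*s))
        - θ*(m+θ)*Real.exp (-(2*m*s)) := by
  have hm0 : 0 < m := hθ.trans hm
  have h1 : m + θ ≠ 0 := by positivity
  have h2' : m ≠ 0 := ne_of_gt hm0
  have h3' : θ ≠ 0 := ne_of_gt hθ
  have key : (m - θ)^2 + 4*θ*m*Real.exp (-((m+θ)*s)) - m*(m+θ)*Real.exp (-(2*θ*s))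
        - θ*(m+θ)*Real.exp (-(2*m*s))
      = 2*θ*m*(m+θ) * ∫ u in (0:ℝ)..s,
          (Real.exp (-(θ*u)) - Real.exp (-(m*u)))^2 := by
    have hsq : ∀ u : ℝ, (Real.exp (-(θ*u)) - Real.exp (-(m*u)))^2
        = Real.exp (-(2*θ*u)) + Real.exp (-(2*m*u))
          - 2 * Real.exp (-((m+θ)*u)) := by
      intro u
      have e1 : Real.exp (-(2*θ*u)) = Real.exp (-(θ*u)) * Real.exp (-(θ*u)) := by
        rw [← Real.exp_add]; ring_nf
      have e2 : Real.exp (-(2*m*u)) = Real.exp (-(m*u)) * Real.exp (-(m*u)) := by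
        rw [← Real.exp_add]; ring_nf
      have e3 : Real.exp (-((m+θ)*u)) = Real.exp (-(θ*u)) * Real.exp (-(m*u)) := by
        rw [← Real.exp_add]; ring_nf
      rw [e1, e2, e3]; ring
    simp_rw [hsq]
    rw [intervalIntegral.integral_sub ((exp_ii _ _ _).add (exp_ii _ _ _))
        ((exp_ii _ _ _).const_mul 2),
      intervalIntegral.integral_add (exp_ii _ _ _) (exp_ii _ _ _),
      intervalIntegral.integral_const_mul,
      int_exp_neg _ _ (by positivity), int_exp_neg _ _ (by positivity),
      int_exp_neg _ _ (by positivity)]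
    field_simp
    ring
  rw [key]
  have h2 : 0 ≤ ∫ u in (0:ℝ)..s, (Real.exp (-(θ*u)) - Real.exp (-(m*u)))^2 :=
    intervalIntegral.integral_nonneg hs (fun u _ => sq_nonneg _)
  positivity

set_option maxHeartbeats 1000000 in
/-- Nonnegativity of the covariance of the lower-bound Gaussian process `Π`:
`P(s,t) ≥ 0` for all `0 ≤ s ≤ t`, where `P(s,t) = E[Π(s)Π(t)]` is the
explicit covariance formula. -/
theorem pi_covariance_nonneg
    (μ₁ μ₂ p θ : ℝ)
    (hμ₁ : 0 < μ₁) (hμ₂ : 0 < μ₂)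
    (hp0 : 0 < p) (hp1 : p < 1)
    (hθ0 : 0 < θ) (hθ : θ < μ₁ * μ₂)
    (P : ℝ → ℝ → ℝ)
    (hP : ∀ s t : ℝ,
      P s t =
        ((μ₁ - μ₂) ^ 2 * p * (1 - p)
              / ((μ₁ * μ₂ + θ) * (μ₁ * μ₂ - θ) * θ) + 1 / θ)
            * Real.exp (-(θ * (t - s)))
        + 2 * (μ₁ - μ₂) ^ 2 * p * (1 - p)
              / ((μ₁ * μ₂ + θ) * (μ₁ * μ₂ - θ) ^ 2)
            * Real.exp (-(μ₁ * μ₂ * s) - θ * t)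
        - ((μ₁ - μ₂) ^ 2 * p * (1 - p) / (θ * (μ₁ * μ₂ - θ) ^ 2) + 1 / θ)
            * Real.exp (-(θ * (s + t)))
        - (μ₁ - μ₂) ^ 2 * p * (1 - p)
              / ((μ₁ * μ₂) * (μ₁ * μ₂ + θ) * (μ₁ * μ₂ - θ))
            * Real.exp (-(μ₁ * μ₂ * (t - s)))
        + 2 * (μ₁ - μ₂) ^ 2 * p * (1 - p)
              / ((μ₁ * μ₂ + θ) * (μ₁ * μ₂ - θ) ^ 2)
            * Real.exp (-(θ * s) - μ₁ * μ₂ * t)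
        - (μ₁ - μ₂) ^ 2 * p * (1 - p) / ((μ₁ * μ₂) * (μ₁ * μ₂ - θ) ^ 2)
            * Real.exp (-(μ₁ * μ₂ * (s + t)))) :
    ∀ s t : ℝ, 0 ≤ s → s ≤ t → 0 ≤ P s t := by
  intro s t hs hst
  set m := μ₁ * μ₂ with hmdef
  have hm0 : 0 < m := mul_pos hμ₁ hμ₂
  have hmθ : 0 < m - θ := sub_pos.mpr hθ
  have hmθ' : m - θ ≠ 0 := ne_of_gt hmθ
  have hmθp : m + θ ≠ 0 := by positivity
  have hm' : m ≠ 0 := ne_of_gt hm0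
  have hθ' : θ ≠ 0 := ne_of_gt hθ0
  set x := Real.exp (-(θ * s)) with hxdef
  set y := Real.exp (-(m * s)) with hydef
  set E := Real.exp (-(θ * (t - s))) with hEdef
  set F := Real.exp (-(m * (t - s))) with hFdef
  have hx : 0 < x := Real.exp_pos _
  have hy : 0 < y := Real.exp_pos _
  have hE : 0 < E := Real.exp_pos _
  have hF : 0 < F := Real.exp_pos _
  have hx1 : x ≤ 1 := Real.exp_le_one_iff.mpr (by nlinarith)
  have hEF : F ≤ E := by
    rw [hEdef, hFdef]; exact Real.exp_le_exp.mpr (by nlinarith)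
  have e2 : Real.exp (-(m * s) - θ * t) = y * x * E := by
    rw [show -(m * s) - θ * t = -(m * s) + -(θ * s) + -(θ * (t - s)) by ring,
      Real.exp_add, Real.exp_add]
  have e3 : Real.exp (-(θ * (s + t))) = x * x * E := by
    rw [show -(θ * (s + t)) = -(θ * s) + -(θ * s) + -(θ * (t - s)) by ring,
      Real.exp_add, Real.exp_add]
  have e5 : Real.exp (-(θ * s) - m * t) = x * y * F := by
    rw [show -(θ * s) - m * t = -(θ * s) + -(m * s) + -(m * (t - s)) by ring,
      Real.exp_add, Real.exp_add]
  have e6 : Real.exp (-(m * (s + t))) = y * y * F := by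
    rw [show -(m * (s + t)) = -(m * s) + -(m * s) + -(m * (t - s)) by ring,
      Real.exp_add, Real.exp_add]
  have hG : 0 ≤ (m - θ) - 2 * m * (x * y) + (m + θ) * (y * y) := by
    have := G_nonneg m θ s hθ0 hθ hs
    have ew : Real.exp (-((m + θ) * s)) = x * y := by
      rw [show -((m + θ) * s) = -(θ * s) + -(m * s) by ring, Real.exp_add]
    have eg : Real.exp (-(2 * m * s)) = y * y := by
      rw [show -(2 * m * s) = -(m * s) + -(m * s) by ring, Real.exp_add]
    rwa [ew, eg] at this
  have hH : 0 ≤ (m - θ) ^ 2 + 4 * θ * m * (x * y) - m * (m + θ) * (x * x)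
      - θ * (m + θ) * (y * y) := by
    have := H_nonneg m θ s hθ0 hθ hs
    have ew : Real.exp (-((m + θ) * s)) = x * y := by
      rw [show -((m + θ) * s) = -(θ * s) + -(m * s) by ring, Real.exp_add]
    have ea : Real.exp (-(2 * θ * s)) = x * x := by
      rw [show -(2 * θ * s) = -(θ * s) + -(θ * s) by ring, Real.exp_add]
    have eg : Real.exp (-(2 * m * s)) = y * y := by
      rw [show -(2 * m * s) = -(m * s) + -(m * s) by ring, Real.exp_add]
    rwa [ew, ea, eg] at this
  set c := (μ₁ - μ₂) ^ 2 * p * (1 - p) with hcdef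
  have hc : 0 ≤ c := by
    have : 0 < 1 - p := by linarith
    positivity
  have key : θ * m * (m + θ) * (m - θ) ^ 2 * P s t
      = c * (E * ((m - θ) ^ 2 + 4 * θ * m * (x * y) - m * (m + θ) * (x * x)
            - θ * (m + θ) * (y * y))
          + θ * ((m - θ) - 2 * m * (x * y) + (m + θ) * (y * y)) * (E - F))
        + m * (m + θ) * (m - θ) ^ 2 * E * (1 - x * x) := by
    rw [hP s t, e2, e3, e5, e6]
    field_simp
    ring
  have hrhs : 0 ≤ θ * m * (m + θ) * (m - θ) ^ 2 * P s t := by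
    rw [key]
    have t1 : 0 ≤ E * ((m - θ) ^ 2 + 4 * θ * m * (x * y) - m * (m + θ) * (x * x)
        - θ * (m + θ) * (y * y)) := mul_nonneg hE.le hH
    have t2 : 0 ≤ θ * ((m - θ) - 2 * m * (x * y) + (m + θ) * (y * y)) * (E - F) :=
      mul_nonneg (mul_nonneg hθ0.le hG) (sub_nonneg.mpr hEF)
    have t3 : 0 ≤ 1 - x * x := by nlinarith
    have t4 : 0 ≤ m * (m + θ) * (m - θ) ^ 2 * E * (1 - x * x) := by
      apply mul_nonneg _ t3
      positivity
    nlinarith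
  have hD : 0 < θ * m * (m + θ) * (m - θ) ^ 2 := by positivity
  nlinarith [hrhs, hD]
end

section
/- Let μ₁, μ₂ be positive reals, p ∈ (0,1) with p/μ₁ + (1−p)/μ₂ = 1, and 0 < θ < μ₁μ₂. Define P(s,t) := ((μ₁−μ₂)²p(1−p)/((μ₁μ₂+θ)(μ₁μ₂−θ)θ) + 1/θ)·exp(−θ(t−s)) + (2(μ₁−μ₂)²p(1−p)/((μ₁μ₂+θ)(μ₁μ₂−θ)²))·exp(−μ₁μ₂·s − θ·t) − ((μ₁−μ₂)²p(1−p)/(θ(μ₁μ₂−θ)²) + 1/θ)·exp(−θ(s+t)) − ((μ₁−μ₂)²p(1−p)/(μ₁μ₂(μ₁μ₂+θ)(μ₁μ₂−θ)))·exp(−μ₁μ₂(t−s)) + (2(μ₁−μ₂)²p(1−p)/((μ₁μ₂+θ)(μ₁μ₂−θ)²))·exp(−θ·s − μ₁μ₂·t) − ((μ₁−μ₂)²p(1−p)/(μ₁μ₂(μ₁μ₂−θ)²))·exp(−μ₁μ₂(s+t)). Then P(t,t) tends to (θ + μ₁ + μ₂ − 1)/(θ(θ + μ₁μ₂)) as t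 → ∞. -/
open Filter

/-- exp(-(c*t)) → 0 as t → ∞ when c > 0. -/
lemma exp_neg_mul_tendsto_zero {c : ℝ} (hc : 0 < c) :
    Tendsto (fun t : ℝ => Real.exp (-(c * t))) atTop (nhds 0) := by
  have h1 : Tendsto (fun t : ℝ => c * t) atTop atTop :=
    Tendsto.const_mul_atTop hc tendsto_id
  exact (Real.tendsto_exp_neg_atTop_nhds_zero).comp h1

/-- The limiting variance of the lower-bound Gaussian process `Π`:
`P(t,t) → (θ + μ₁ + μ₂ − 1)/(θ(θ + μ₁μ₂))` as `t → ∞`, where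
`P(s,t) = E[Π(s)Π(t)]` is the explicit covariance formula. -/
theorem pi_variance_limit
    (μ₁ μ₂ p θ : ℝ)
    (hμ₁ : 0 < μ₁) (hμ₂ : 0 < μ₂)
    (hp0 : 0 < p) (hp1 : p < 1)
    (hmean : p / μ₁ + (1 - p) / μ₂ = 1)
    (hθ0 : 0 < θ) (hθ : θ < μ₁ * μ₂)
    (P : ℝ → ℝ → ℝ)
    (hP : ∀ s t : ℝ,
      P s t =
        ((μ₁ - μ₂) ^ 2 * p * (1 - p)
              / ((μ₁ * μ₂ + θ) * (μ₁ * μ₂ - θ) * θ) + 1 / θ)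
            * Real.exp (-(θ * (t - s)))
        + 2 * (μ₁ - μ₂) ^ 2 * p * (1 - p)
              / ((μ₁ * μ₂ + θ) * (μ₁ * μ₂ - θ) ^ 2)
            * Real.exp (-(μ₁ * μ₂ * s) - θ * t)
        - ((μ₁ - μ₂) ^ 2 * p * (1 - p) / (θ * (μ₁ * μ₂ - θ) ^ 2) + 1 / θ)
            * Real.exp (-(θ * (s + t)))
        - (μ₁ - μ₂) ^ 2 * p * (1 - p)
              / ((μ₁ * μ₂) * (μ₁ * μ₂ + θ) * (μ₁ * μ₂ - θ))
            * Real.exp (-(μ₁ * μ₂ * (t - s)))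
        + 2 * (μ₁ - μ₂) ^ 2 * p * (1 - p)
              / ((μ₁ * μ₂ + θ) * (μ₁ * μ₂ - θ) ^ 2)
            * Real.exp (-(θ * s) - μ₁ * μ₂ * t)
        - (μ₁ - μ₂) ^ 2 * p * (1 - p) / ((μ₁ * μ₂) * (μ₁ * μ₂ - θ) ^ 2)
            * Real.exp (-(μ₁ * μ₂ * (s + t)))) :
    Tendsto (fun t => P t t) atTop
      (nhds ((θ + μ₁ + μ₂ - 1) / (θ * (θ + μ₁ * μ₂)))) := by
  set m := μ₁ * μ₂ with hmdef
  have hm0 : 0 < m := mul_pos hμ₁ hμ₂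
  have hmθ : 0 < m - θ := by linarith
  have hmθ' : 0 < m + θ := by linarith
  set k := (μ₁ - μ₂) ^ 2 * p * (1 - p) with hkdef
  -- mean condition in polynomial form
  have hm' : p * μ₂ + (1 - p) * μ₁ = μ₁ * μ₂ := by
    field_simp at hmean
    linarith [hmean]
  have hk : k = μ₁ * μ₂ * (μ₁ + μ₂ - μ₁ * μ₂ - 1) := by
    rw [hkdef]
    linear_combination (μ₁ + μ₂ - (p * μ₂ + (1 - p) * μ₁) - μ₁ * μ₂) * hm'
  set c₀ := (θ + μ₁ + μ₂ - 1) / (θ * (θ + μ₁ * μ₂)) with hc₀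
  -- constant coefficient identity
  have hc : k / ((m + θ) * (m - θ) * θ) + 1 / θ - k / (m * (m + θ) * (m - θ)) = c₀ := by
    rw [hk, hc₀, hmdef]
    field_simp [show μ₁ * μ₂ - θ ≠ 0 from sub_ne_zero.mpr (ne_of_gt hθ), show μ₁ * μ₂ + θ ≠ 0 from ne_of_gt hmθ', show θ + μ₁ * μ₂ ≠ 0 from by linarith, hθ0.ne']
    ring
  -- rewrite P t t explicitly
  have key : ∀ t : ℝ, P t t =
      c₀ + (2 * k / ((m + θ) * (m - θ) ^ 2)) * Real.exp (-((m + θ) * t))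
        + (2 * k / ((m + θ) * (m - θ) ^ 2)) * Real.exp (-((m + θ) * t))
        - (k / (θ * (m - θ) ^ 2) + 1 / θ) * Real.exp (-(2 * θ * t))
        - (k / (m * (m - θ) ^ 2)) * Real.exp (-(2 * m * t)) := by
    intro t
    rw [hP t t]
    rw [show -(θ * (t - t)) = (0:ℝ) by ring,
        show -(m * t) - θ * t = -((m + θ) * t) by ring,
        show -(θ * (t + t)) = -(2 * θ * t) by ring,
        show -(m * (t - t)) = (0:ℝ) by ring,
        show -(θ * t) - m * t = -((m + θ) * t) by ring,
        show -(m * (t + t)) = -(2 * m * t) by ring,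
        Real.exp_zero]
    linear_combination hc
  have hlim : Tendsto (fun t : ℝ =>
      c₀ + (2 * k / ((m + θ) * (m - θ) ^ 2)) * Real.exp (-((m + θ) * t))
        + (2 * k / ((m + θ) * (m - θ) ^ 2)) * Real.exp (-((m + θ) * t))
        - (k / (θ * (m - θ) ^ 2) + 1 / θ) * Real.exp (-(2 * θ * t))
        - (k / (m * (m - θ) ^ 2)) * Real.exp (-(2 * m * t))) atTop (nhds c₀) := by
    have e1 := (exp_neg_mul_tendsto_zero hmθ').const_mul (2 * k / ((m + θ) * (m - θ) ^ 2))
    have e2 := (exp_neg_mul_tendsto_zero (by linarith : (0:ℝ) < 2 * θ)).const_mul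
      (k / (θ * (m - θ) ^ 2) + 1 / θ)
    have e3 := (exp_neg_mul_tendsto_zero (by linarith : (0:ℝ) < 2 * m)).const_mul
      (k / (m * (m - θ) ^ 2))
    have := ((((tendsto_const_nhds (x := c₀) (f := atTop)).add e1).add e1).sub e2).sub e3
    simpa using this
  exact hlim.congr (fun t => (key t).symm)
end
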